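/- Let m ≥ 1 and let r = [m_1,...,m_k] with m_1 = m and k ≥ 2. If m_2 = 1 then the palindromic block S_1 of the decomposition S(r) = (S_1,S_2,S_1,S_2) contains two consecutive terms (m+1, m+1). If m_2 ≥ 2 and r ≠ 2/(2m+1) (i.e., r ≠ [m,2]), then S_2 contains two consecutive terms (m, m). -/

import Mathlib

/-- The exponent-letter word `u_{q/p} = a^{ε₁} b^{ε₂} ⋯ a^{ε_{2p-1}} b^{ε_{2p}}`,
encoded as a list of letters `(generator, sign)` with `true = a`, `false = b`,
and sign `true` meaning exponent `+1`.  Here (0-indexed) `ε_{j+1} = (-1)^⌊jq/p⌋`. -/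
def epsWord (p q : ℕ) : List (Bool × Bool) :=
  (List.range (2 * p)).map fun j => (decide (j % 2 = 0), decide ((j * q / p) % 2 = 0))

/-- The S-sequence of slope `q/p`: run lengths of the sign pattern `⌊jq/p⌋ mod 2`. -/
def signRuns (p q : ℕ) : List ℕ :=
  (((List.range (2 * p)).map fun j => (j * q / p) % 2).splitBy (· == ·)).map List.length

/-- The S-sequence of a rational number. -/
def SseqQ (r : ℚ) : List ℕ := signRuns r.den r.num.toNat

/-- Continued fraction `[m₁, m₂, …, m_k] = 1/(m₁ + 1/(m₂ + ⋯ + 1/m_k))`. -/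
def contFrac : List ℕ → ℚ
  | [] => 0
  | m :: l => 1 / (m + contFrac l)


open List

section AuxiliaryLemmas

set_option maxHeartbeats 1000000

theorem myLoop_eq_append {α : Type*} {r : α → α → Bool} {l : List α} {a : α} {g : List α}
    (gs : List (List α)) : splitBy.loop r l a g gs = gs.reverse ++ splitBy.loop r l a g [] := by
  induction l generalizing a g gs with
  | nil => simp [splitBy.loop]
  | cons b l IH =>
    simp_rw [splitBy.loop]
    split <;> rw [IH]
    conv_rhs => rw [IH]
    simp

theorem splitBy_loop_chunk {α : Type*} (r : α → α → Bool) : ∀ (as : List α) (a : α) (g : List α)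
    (l' : List α), Chain' (fun x y => r x y = true) (a :: as) →
    (∀ x ∈ (a :: as).getLast?, ∀ y ∈ l'.head?, r x y = false) →
    splitBy.loop r (as ++ l') a g [] = (g.reverse ++ a :: as) :: l'.splitBy r := by
  intro as
  induction as with
  | nil =>
    intro a g l' _ hb
    cases l' with
    | nil => simp [splitBy.loop, List.splitBy]
    | cons b l'' =>
      rw [nil_append, splitBy.loop]
      have : r a b = false := hb a (by simp) b (by simp)
      rw [this]
      simp only [Bool.false_eq_true, if_false]
      rw [myLoop_eq_append]
      simp [List.splitBy]
  | cons a' as' IH =>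
    intro a g l' hc hb
    rw [cons_append, splitBy.loop]
    have : r a a' = true := (isChain_cons_cons.1 hc).1
    rw [this]
    simp only [if_true]
    rw [IH a' (a :: g) l' (isChain_cons_cons.1 hc).2 (by simpa using hb)]
    simp

theorem splitBy_flatten_chunks {α : Type*} (r : α → α → Bool) : ∀ (c : List (List α)),
    (∀ m ∈ c, m ≠ []) → (∀ m ∈ c, Chain' (fun x y => r x y = true) m) →
    Chain' (fun A B => ∀ x ∈ A.getLast?, ∀ y ∈ B.head?, r x y = false) c →
    (c.flatten).splitBy r = c := by
  intro c
  induction c with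
  | nil => intro _ _ _; rfl
  | cons c1 cs IH =>
    intro h1 h2 h3
    obtain ⟨a, as, rfl⟩ : ∃ a as, c1 = a :: as := by
      cases c1 with
      | nil => exact absurd rfl (h1 [] mem_cons_self)
      | cons x xs => exact ⟨x, xs, rfl⟩
    have hbd : ∀ x ∈ (a :: as).getLast?, ∀ y ∈ (cs.flatten).head?, r x y = false := by
      intro x hx y hy
      cases cs with
      | nil => simp at hy
      | cons c2 cs' =>
        obtain ⟨b, bs, rfl⟩ : ∃ b bs, c2 = b :: bs := by
          cases c2 with
          | nil => exact absurd rfl (h1 [] (by simp))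
          | cons u us => exact ⟨u, us, rfl⟩
        have := (isChain_cons_cons.1 h3).1
        simp only [flatten_cons, head?_append, head?_cons] at hy ⊢
        exact this x hx y (by simpa using hy)
    rw [flatten_cons, cons_append, List.splitBy]
    rw [splitBy_loop_chunk r as a [] _ (h2 _ mem_cons_self) hbd]
    rw [IH (fun m hm => h1 m (mem_cons_of_mem _ hm)) (fun m hm => h2 m (mem_cons_of_mem _ hm))
      (List.IsChain.tail h3)]
    simp

theorem map_range_eq_flatten (g h c : ℕ → ℕ) (hc0 : c 0 = 0)
    (hmono : ∀ i, c i ≤ c (i + 1)) :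
    ∀ n, (∀ i, i < n → ∀ j, c i ≤ j → j < c (i + 1) → g j = h i) →
    (range (c n)).map g = ((range n).map (fun i => replicate (c (i + 1) - c i) (h i))).flatten := by
  intro n
  induction n with
  | zero => intro _; simp [hc0]
  | succ n IH =>
    intro hv
    rw [show c (n+1) = c n + (c (n+1) - c n) from by have := hmono n; omega]
    rw [range_add, map_append, range_succ, map_append, flatten_append]
    rw [IH (fun i hi => hv i (Nat.lt_succ_of_lt hi))]
    congr 1
    simp only [map_cons, map_nil, flatten_cons, flatten_nil, append_nil]
    rw [map_map, eq_replicate_iff]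
    constructor
    · simp
    · intro b hb
      simp only [mem_map, mem_range] at hb
      obtain ⟨k, hk, rfl⟩ := hb
      exact hv n (Nat.lt_succ_self n) (c n + k) (Nat.le_add_right _ _) (by omega)

theorem chain'_beq_replicate (d : ℕ) (v : ℕ) :
    Chain' (fun x y => (x == y) = true) (replicate d v) := by
  induction d with
  | zero => exact IsChain.nil
  | succ d IH =>
    rw [replicate_succ]
    cases d with
    | zero => exact List.IsChain.singleton _
    | succ d => rw [replicate_succ]; exact isChain_cons_cons.2 ⟨by simp, by rwa [← replicate_succ]⟩

theorem signRuns_eq (p q : ℕ) (h0 : 0 < q) (hqp : q < p) :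
    signRuns p q
      = (range (2*q)).map (fun i => ((i+1)*p + q - 1)/q - (i*p + q - 1)/q) := by
  have hp0 : 0 < p := by omega
  set c : ℕ → ℕ := fun i => (i*p + q - 1)/q with hc
  have hchar : ∀ i j, c i ≤ j ↔ i*p ≤ j*q := by
    intro i j
    have : c i ≤ j ↔ c i < j + 1 := by omega
    rw [this, hc]
    simp only []
    rw [Nat.div_lt_iff_lt_mul h0, add_mul, one_mul]
    omega
  have hmono : ∀ i, c i ≤ c (i+1) := by
    intro i
    apply Nat.div_le_div_right
    have : i*p ≤ (i+1)*p := Nat.mul_le_mul_right p (by omega)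
    omega
  have hlt : ∀ i, c i < c (i+1) := by
    intro i
    by_contra hcon
    push_neg at hcon
    have h1 : (i+1)*p ≤ (c i)*q := (hchar (i+1) (c i)).1 hcon
    have h2 : (c i)*q ≤ i*p + q - 1 := Nat.div_mul_le_self _ _
    have h3 : (i+1)*p = i*p + p := by ring
    omega
  have hG : (range (2*p)).map (fun j => (j*q/p) % 2)
      = ((range (2*q)).map (fun i => replicate (c (i+1) - c i) (i % 2))).flatten := by
    have h2p : c (2*q) = 2*p := by
      show (2*q*p + q - 1)/q = 2*p
      rw [show 2*q*p + q - 1 = q*(2*p) + (q-1) from by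
        have : 2*q*p = q*(2*p) := by ring
        omega]
      rw [Nat.mul_add_div h0, Nat.div_eq_of_lt (by omega)]
      omega
    rw [← h2p]
    apply map_range_eq_flatten _ _ c ?_ hmono
    · intro i _ j hle hltj
      have h1 : i * p ≤ j * q := (hchar i j).1 hle
      have h2 : j * q < (i+1) * p := by
        by_contra hcon
        push_neg at hcon
        have := (hchar (i+1) j).2 (by omega)
        omega
      have e1 : i ≤ j*q/p := (Nat.le_div_iff_mul_le hp0).2 h1
      have e2 : j*q/p < i+1 := (Nat.div_lt_iff_lt_mul hp0).2 h2
      have : j*q/p = i := by omega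
      rw [this]
    · show (0*p + q - 1)/q = 0
      rw [Nat.div_eq_of_lt (by omega)]
  rw [signRuns, hG, splitBy_flatten_chunks]
  · rw [map_map]
    apply List.map_congr_left
    intro i _
    simp [hc]
  · intro l hl
    simp only [mem_map, mem_range] at hl
    obtain ⟨i, _, rfl⟩ := hl
    have := hlt i
    simp only [ne_eq, replicate_eq_nil_iff]
    omega
  · intro l hl
    simp only [mem_map, mem_range] at hl
    obtain ⟨i, _, rfl⟩ := hl
    exact chain'_beq_replicate _ _
  · unfold Chain'
    rw [isChain_map]
    cases hq2 : 2*q with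
    | zero => simp
    | succ n =>
      rw [isChain_range_succ]
      intro i hi
      simp only [Nat.succ_eq_add_one]
      intro x hx y hy
      rw [getLast?_replicate] at hx
      rw [head?_replicate] at hy
      have d1 := hlt i
      have d2 := hlt (i+1)
      rw [if_neg (by omega)] at hx hy
      simp only [Option.mem_some_iff] at hx hy
      subst hx; subst hy
      simp only [beq_eq_false_iff_ne, ne_eq]
      omega

theorem contFrac_bounds : ∀ l : List ℕ, l ≠ [] → (∀ y ∈ l, 0 < y) →
    (∀ y ∈ l.getLast?, 2 ≤ y) → 0 < contFrac l ∧ contFrac l < 1 := by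
  intro l
  induction l with
  | nil => intro h; exact absurd rfl h
  | cons a l IH =>
    intro _ hpos hlast
    cases l with
    | nil =>
      have ha : 2 ≤ a := hlast a (by simp)
      have ha' : (2:ℚ) ≤ (a:ℚ) := by exact_mod_cast ha
      constructor
      · show 0 < 1 / ((a:ℚ) + contFrac [])
        show 0 < 1 / ((a:ℚ) + 0)
        rw [add_zero]
        positivity
      · show 1 / ((a:ℚ) + contFrac []) < 1
        show 1 / ((a:ℚ) + 0) < 1
        rw [add_zero, div_lt_one (by linarith)]
        linarith
    | cons b l' =>
      have hbl : 0 < contFrac (b :: l') ∧ contFrac (b :: l') < 1 := by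
        apply IH (by simp) (fun y hy => hpos y (mem_cons_of_mem _ hy))
        intro y hy
        exact hlast y (by rwa [getLast?_cons_cons])
      have ha : 1 ≤ a := hpos a (by simp)
      have ha' : (1:ℚ) ≤ (a:ℚ) := by exact_mod_cast ha
      constructor
      · show 0 < 1 / ((a:ℚ) + contFrac (b :: l'))
        apply div_pos one_pos
        linarith [hbl.1]
      · show 1 / ((a:ℚ) + contFrac (b :: l')) < 1
        rw [div_lt_one (by linarith [hbl.1])]
        linarith [hbl.1]

theorem rat_struct (m m2 : ℕ) (rest : List ℕ) (hm : 1 ≤ m) (h2 : 0 < m2)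
    (hpos : ∀ x ∈ rest, 0 < x)
    (hlast : ∀ x ∈ (m :: m2 :: rest).getLast?, 2 ≤ x)
    (r : ℚ) (hr : r = contFrac (m :: m2 :: rest)) :
    ∃ Q T : ℕ, 0 < T ∧ T < Q ∧ r.num.toNat = Q ∧ r.den = m*Q + T ∧
      (m2 = 1 → Q < 2*T) ∧ (2 ≤ m2 → (m :: m2 :: rest) ≠ [m, 2] → 2*T < Q) := by
  set x := contFrac (m2 :: rest) with hxdef
  have hlast' : ∀ y ∈ (m2 :: rest).getLast?, 2 ≤ y := by
    intro y hy; exact hlast y (by rwa [getLast?_cons_cons])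
  have hx : 0 < x ∧ x < 1 := by
    apply contFrac_bounds _ (by simp) _ hlast'
    intro y hy
    rcases mem_cons.1 hy with h | h
    · omega
    · exact hpos y h
  set Q := x.den with hQdef
  set T := x.num.toNat with hTdef
  have hnum : 0 < x.num := Rat.num_pos.2 hx.1
  have hQ : 0 < Q := x.pos
  have hT : 0 < T := by omega
  have hTz : (T : ℤ) = x.num := Int.toNat_of_nonneg hnum.le
  have hxTQ : x = (T : ℚ)/(Q : ℚ) := by
    rw [← Rat.num_div_den x, ← hTz, ← hQdef]
    push_cast
    ring
  have hTQ : T < Q := by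
    have h1 : (T : ℚ) < (Q : ℚ) := by
      have := hx.2
      rw [hxTQ, div_lt_one (by exact_mod_cast hQ)] at this
      exact this
    exact_mod_cast h1
  -- coprimality
  have hcop : Nat.Coprime T Q := by
    have h1 : x.num.natAbs = T := by omega
    rw [← h1]; exact x.reduced
  have hcop2 : Nat.Coprime Q (m*Q + T) := by
    have h1 : Nat.Coprime (T + Q*m) Q := (Nat.coprime_add_mul_left_left T Q m).2 hcop
    have h2 : T + Q*m = m*Q + T := by ring
    rw [h2] at h1
    exact h1.symm
  -- r as a quotient
  have hden_pos : 0 < m*Q + T := by positivity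
  have hr2 : r = ((Q : ℤ) : ℚ) / (((m*Q + T : ℕ) : ℤ) : ℚ) := by
    rw [hr]
    show (1 : ℚ) / ((m : ℚ) + x) = _
    rw [hxTQ]
    have hQne : (Q : ℚ) ≠ 0 := by exact_mod_cast hQ.ne'
    have h1 : (m : ℚ) + (T : ℚ)/(Q : ℚ) = ((m*Q + T : ℕ) : ℚ)/(Q : ℚ) := by
      push_cast
      field_simp
    rw [h1, one_div_div]
    push_cast
    ring
  have hrnum : r.num = (Q : ℤ) := by
    rw [hr2]
    apply Rat.num_div_eq_of_coprime (by exact_mod_cast hden_pos)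
    simpa only [← Nat.cast_mul, ← Nat.cast_add, Int.natAbs_natCast] using hcop2
  have hrden : r.den = m*Q + T := by
    have := Rat.den_div_eq_of_coprime (a := (Q:ℤ)) (b := ((m*Q+T : ℕ) : ℤ))
      (by exact_mod_cast hden_pos) (by simpa only [← Nat.cast_mul, ← Nat.cast_add, Int.natAbs_natCast] using hcop2)
    rw [← hr2] at this
    exact_mod_cast this
  refine ⟨Q, T, hT, hTQ, by omega, hrden, ?_, ?_⟩
  · -- m2 = 1 → Q < 2T
    intro hm2
    subst hm2
    have hrest : rest ≠ [] := by
      intro h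
      subst h
      have := hlast 1 (by simp)
      omega
    obtain ⟨c, l, rfl⟩ : ∃ c l, rest = c :: l := by
      cases rest with
      | nil => exact absurd rfl hrest
      | cons c l => exact ⟨c, l, rfl⟩
    have hy : 0 < contFrac (c :: l) ∧ contFrac (c :: l) < 1 := by
      apply contFrac_bounds _ (by simp) hpos
      intro y hy
      apply hlast y
      rwa [getLast?_cons_cons, getLast?_cons_cons]
    have hxval : x = 1 / ((1 : ℚ) + contFrac (c :: l)) := by
      rw [hxdef]
      show contFrac (1 :: c :: l) = _
      show 1 / ((1:ℕ) + contFrac (c :: l)) = _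
      norm_num
    have hhalf : (1:ℚ)/2 < x := by
      rw [hxval]
      rw [div_lt_div_iff₀ (by norm_num) (by linarith [hy.1])]
      linarith [hy.2]
    rw [hxTQ, div_lt_div_iff₀ (by norm_num) (by exact_mod_cast hQ)] at hhalf
    have : (Q : ℚ) < 2 * T := by linarith
    exact_mod_cast this
  · -- 2 ≤ m2 ∧ ≠ [m,2] → 2T < Q
    intro hm2 hne
    have hxval : x = 1 / ((m2 : ℚ) + contFrac rest) := rfl
    have hhalf : x < (1:ℚ)/2 := by
      cases rest with
      | nil =>
        have hm2' : 3 ≤ m2 := by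
          rcases Nat.lt_or_ge m2 3 with h | h
          · interval_cases m2
            · exact absurd rfl hne
          · exact h
        rw [hxval]
        show (1:ℚ) / ((m2 : ℚ) + contFrac []) < 1/2
        show (1:ℚ) / ((m2 : ℚ) + 0) < 1/2
        rw [add_zero]
        have : (3:ℚ) ≤ (m2:ℚ) := by exact_mod_cast hm2'
        rw [div_lt_div_iff₀ (by linarith) (by norm_num)]
        linarith
      | cons c l =>
        have hy : 0 < contFrac (c :: l) ∧ contFrac (c :: l) < 1 := by
          apply contFrac_bounds _ (by simp) hpos
          intro y hy
          apply hlast y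
          rwa [getLast?_cons_cons, getLast?_cons_cons]
        rw [hxval]
        have : (2:ℚ) ≤ (m2:ℚ) := by exact_mod_cast hm2
        rw [div_lt_div_iff₀ (by linarith [hy.1]) (by norm_num)]
        linarith [hy.1]
    rw [hxTQ, div_lt_div_iff₀ (by exact_mod_cast hQ) (by norm_num)] at hhalf
    have : (2 : ℚ) * T < Q := by linarith
    exact_mod_cast this

theorem pal_get {l : List ℕ} (h : l.reverse = l) {i : ℕ} (hi : i < l.length) :
    l[i] = l[l.length - 1 - i]'(by omega) := by
  have h1 : l.reverse[i]? = l[i]? := by rw [h]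
  rw [List.getElem?_reverse hi] at h1
  rw [List.getElem?_eq_getElem hi, List.getElem?_eq_getElem (by omega)] at h1
  exact (Option.some_injective _ h1).symm

theorem divHelperCF (m Q T i : ℕ) (hQ : 0 < Q) :
    (i*(m*Q+T) + Q - 1)/Q = i*m + (i*T + Q - 1)/Q := by
  have e1 : i*(m*Q+T) = Q*(i*m) + i*T := by ring
  have e2 : i*(m*Q+T) + Q - 1 = Q*(i*m) + (i*T + Q - 1) := by omega
  rw [e2, Nat.mul_add_div hQ]


end AuxiliaryLemmas

set_option maxHeartbeats 1000000 in
/-- in the palindromic decomposition `S(r) = (S₁,S₂,S₁,S₂)` of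
`r = [m, m₂, …]`: if `m₂ = 1` then `(m+1, m+1)` appears in `S₁`; if `m₂ ≥ 2` and
`r ≠ [m, 2]` then `(m, m)` appears in `S₂`. -/
theorem consecutive_in_S1_S2 (m m2 : ℕ) (rest : List ℕ) (hm : 1 ≤ m) (h2 : 0 < m2)
    (hpos : ∀ x ∈ rest, 0 < x)
    (hlast : ∀ x ∈ (m :: m2 :: rest).getLast?, 2 ≤ x)
    (r : ℚ) (hr : r = contFrac (m :: m2 :: rest))
    (S1 S2 : List ℕ) (hdec : SseqQ r = S1 ++ S2 ++ S1 ++ S2)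
    (hS1 : S1.reverse = S1) (hS2 : S2.reverse = S2)
    (hS1h : S1.head? = some (m + 1)) (hS2h : S2.head? = some m) :
    (m2 = 1 → [m + 1, m + 1] <:+: S1) ∧
    (2 ≤ m2 → (m :: m2 :: rest) ≠ [m, 2] → [m, m] <:+: S2) := by
  obtain ⟨Q, T, hT, hTQ, hnum, hden, hc1, hc2⟩ :=
    rat_struct m m2 rest hm h2 hpos hlast r hr
  set p := m*Q + T with hpdef
  have hQ : 0 < Q := by omega
  have hQp : Q < p := by
    have h1 : 1*Q ≤ m*Q := Nat.mul_le_mul_right Q hm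
    omega
  set F : ℕ → ℕ := fun i => ((i+1)*p + Q - 1)/Q - (i*p + Q - 1)/Q with hF
  have hW : SseqQ r = (range (2*Q)).map F := by
    rw [SseqQ, hnum, hden]
    exact signRuns_eq p Q hQ hQp
  set a := S1.length with hadef
  set b := S2.length with hbdef
  have hS1ne : S1 ≠ [] := by intro h; rw [h] at hS1h; simp at hS1h
  have hS2ne : S2 ≠ [] := by intro h; rw [h] at hS2h; simp at hS2h
  have ha : 0 < a := length_pos_iff.2 hS1ne
  have hb : 0 < b := length_pos_iff.2 hS2ne
  have hlen : a + b = Q := by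
    have hlc := congrArg List.length hdec
    rw [hW] at hlc
    simp only [length_map, length_range, length_append] at hlc
    omega
  have hS10 : S1[0]'ha = m + 1 := by
    rw [head?_eq_getElem?] at hS1h
    obtain ⟨h, hh⟩ := List.getElem?_eq_some_iff.1 hS1h
    exact hh
  have hS20 : S2[0]'hb = m := by
    rw [head?_eq_getElem?] at hS2h
    obtain ⟨h, hh⟩ := List.getElem?_eq_some_iff.1 hS2h
    exact hh
  have hw1 : ∀ i (hi : i < a), S1[i]'hi = F i := by
    intro i hi
    have h1 : (SseqQ r)[i]? = some (F i) := by
      rw [hW, List.getElem?_map, List.getElem?_range (by omega : i < 2*Q)]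
      rfl
    rw [hdec, append_assoc, append_assoc,
      List.getElem?_append_left (by omega : i < S1.length),
      List.getElem?_eq_getElem hi] at h1
    exact Option.some_injective _ h1
  have hw2 : ∀ j (hj : j < b), S2[j]'hj = F (a + j) := by
    intro j hj
    have h1 : (SseqQ r)[a+j]? = some (F (a + j)) := by
      rw [hW, List.getElem?_map, List.getElem?_range (by omega : a + j < 2*Q)]
      rfl
    rw [hdec, append_assoc, append_assoc,
      List.getElem?_append_right (by omega : S1.length ≤ a + j),
      show a + j - S1.length = j from by omega,
      List.getElem?_append_left (by omega : j < S2.length),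
      List.getElem?_eq_getElem hj] at h1
    exact Option.some_injective _ h1
  constructor
  · -- case m2 = 1
    intro hm2
    have hQ2T : Q < 2*T := hc1 hm2
    have hF1 : F 1 = m + 1 := by
      show ((1+1)*p + Q - 1)/Q - (1*p + Q - 1)/Q = m + 1
      rw [show (1+1)*p = 2*p from by ring, show (1:ℕ)*p = 1*p from rfl]
      rw [divHelperCF m Q T 1 hQ, divHelperCF m Q T 2 hQ]
      rw [show (1*T + Q - 1)/Q = 1 from Nat.div_eq_of_lt_le (by omega) (by omega),
        show (2*T + Q - 1)/Q = 2 from Nat.div_eq_of_lt_le (by omega) (by omega)]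
      omega
    have ha2 : 2 ≤ a := by
      by_contra hcon
      have ha1 : a = 1 := by omega
      have hval := hw2 0 hb
      rw [hS20, ha1, hF1] at hval
      omega
    have hS11 : S1[1]'(by omega) = m + 1 := by rw [hw1 1 (by omega), hF1]
    refine ⟨[], S1.drop 2, ?_⟩
    rw [nil_append]
    have e0 : S1 = S1[0]'ha :: S1.drop 1 := by
      conv_lhs => rw [← @drop_zero _ S1, List.drop_eq_getElem_cons ha]
    have e1 : S1.drop 1 = S1[1]'(by omega) :: S1.drop 2 := List.drop_eq_getElem_cons (by omega)
    rw [hS10] at e0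
    rw [hS11] at e1
    rw [e1] at e0
    rw [e0]
    rfl
  · -- case 2 ≤ m2
    intro hm2 hne
    have h2T : 2*T < Q := hc2 hm2 hne
    have hQ3 : 3 ≤ Q := by omega
    have hFQ2 : F (Q - 2) = m := by
      show ((Q-2+1)*p + Q - 1)/Q - ((Q-2)*p + Q - 1)/Q = m
      rw [show Q - 2 + 1 = Q - 1 from by omega]
      rw [divHelperCF m Q T (Q-1) hQ, divHelperCF m Q T (Q-2) hQ]
      have h1 : (Q-1)*T + T = Q*T := by
        calc (Q-1)*T + T = ((Q-1)+1)*T := by ring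
          _ = Q*T := by rw [show Q-1+1 = Q from by omega]
      have h1' : (Q-2)*T + 2*T = Q*T := by
        calc (Q-2)*T + 2*T = ((Q-2)+2)*T := by ring
          _ = Q*T := by rw [show Q-2+2 = Q from by omega]
      have h2 : (T+1)*Q = T*Q + Q := by ring
      have h3 : T*Q = Q*T := by ring
      have k1 : ((Q-1)*T + Q - 1)/Q = T :=
        Nat.div_eq_of_lt_le (by omega) (by omega)
      have k2 : ((Q-2)*T + Q - 1)/Q = T :=
        Nat.div_eq_of_lt_le (by omega) (by omega)
      rw [k1, k2]
      have h4 : (Q-1)*m = (Q-2)*m + m := by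
        calc (Q-1)*m = ((Q-2)+1)*m := by rw [show Q-2+1 = Q-1 from by omega]
          _ = (Q-2)*m + m := by ring
      omega
    rcases Nat.lt_or_ge b 2 with hb1 | hb2
    · -- b = 1 : contradiction
      exfalso
      have hpal := pal_get hS1 (i := 0) ha
      rw [hS10] at hpal
      have h5 : S1[a - 1]'(by omega) = F (a-1) := hw1 (a-1) (by omega)
      simp only [show S1.length - 1 - 0 = a - 1 from by omega] at hpal
      rw [← hpal] at h5
      have h7 : F (a - 1) = F (Q - 2) := by congr 1; omega
      rw [h7, hFQ2] at h5
      omega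
    · -- b ≥ 2
      have hpal := pal_get hS2 (i := 0) hb
      rw [hS20] at hpal
      simp only [show S2.length - 1 - 0 = b - 1 from by omega] at hpal
      have hlast1 : S2[b-2]'(by omega) = m := by
        have h6 := hw2 (b-2) (by omega)
        have h7 : F (a + (b - 2)) = F (Q - 2) := by congr 1; omega
        exact h6.trans (h7.trans hFQ2)
      have e5 : S2.drop (b-2) = [m, m] := by
        apply List.ext_getElem?
        intro i
        rw [List.getElem?_drop]
        match i with
        | 0 =>
          rw [List.getElem?_eq_getElem (by omega : b - 2 + 0 < S2.length)]
          have : S2[b-2+0]'(by omega) = S2[b-2]'(by omega) := by congr 1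
          rw [this, hlast1]
          rfl
        | 1 =>
          rw [List.getElem?_eq_getElem (by omega : b - 2 + 1 < S2.length)]
          have : S2[b-2+1]'(by omega) = S2[b-1]'(by omega) := by congr 1; omega
          rw [this, ← hpal]
          rfl
        | (n+2) =>
          rw [List.getElem?_eq_none (by omega : S2.length ≤ b - 2 + (n+2)),
            List.getElem?_eq_none (by simp : ([m,m] : List ℕ).length ≤ n+2)]
      exact (e5 ▸ List.drop_suffix (b-2) S2).isInfix
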